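/- For all n, k with 0 ≤ k ≤ ⌊n/2⌋, the identity x^n = Σ_{k=0}^{⌊n/2⌋} X_{n−2k,n} · U_{n−2k}(x) holds in ℤ[x], where X_{m,n} = ((m+1)·2/(n+m+2))·C(n, (n−m)/2); explicitly x^n = Σ_{k=0}^{⌊n/2⌋} ((n−2k+1)/(n−k+1))·C(n,k)·U_{n−2k}(x). -/

import Mathlib

noncomputable def U : ℕ → Polynomial ℤ
  | 0 => 1
  | 1 => Polynomial.X
  | (n + 2) => Polynomial.X * U (n + 1) - U n

noncomputable def V : ℕ → Polynomial ℤ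
  | 0 => 0
  | (j + 1) => U j

def g : ℕ → ℕ → ℤ
  | 0, j => if j = 1 then 1 else 0
  | (_ + 1), 0 => 0
  | (n + 1), (j + 1) => g n j + g n (j + 2)

def c (n k : ℕ) : ℤ := (n.choose k : ℤ) - if k = 0 then 0 else (n.choose (k - 1) : ℤ)

lemma g_zero_right (n : ℕ) : g n 0 = 0 := by cases n <;> simp [g]

lemma g_vanish : ∀ n j, n + 2 ≤ j → g n j = 0 := by
  intro n
  induction n with
  | zero => intro j hj; simp [g]; omega
  | succ n ih =>
    intro j hj
    match j, hj with
    | (j + 1), hj =>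
      show g n j + g n (j + 2) = 0
      rw [ih j (by omega), ih (j + 2) (by omega)]; ring

lemma g_parity : ∀ n j, (n + j) % 2 = 0 → g n j = 0 := by
  intro n
  induction n with
  | zero => intro j hj; simp [g]; omega
  | succ n ih =>
    intro j hj
    match j with
    | 0 => rfl
    | (j + 1) =>
      show g n j + g n (j + 2) = 0
      rw [ih j (by omega), ih (j + 2) (by omega)]; ring

lemma XV (j : ℕ) : Polynomial.X * V (j + 1) = V (j + 2) + V j := by
  match j with
  | 0 => simp [V, U]
  | (m + 1) =>
    show Polynomial.X * U (m + 1) = U (m + 2) + U m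
    rw [show U (m + 2) = Polynomial.X * U (m + 1) - U m from rfl]; ring

lemma main1 (n : ℕ) : (Polynomial.X : Polynomial ℤ) ^ n =
    ∑ j ∈ Finset.range (n + 2), Polynomial.C (g n j) * V j := by
  induction n with
  | zero =>
    rw [Finset.sum_range_succ, Finset.sum_range_succ]
    simp [g, V, U]
  | succ n ih =>
    have step : ∀ j, Polynomial.C (g n j) * (Polynomial.X * V j)
        = Polynomial.C (g n j) * V (j + 1) + Polynomial.C (g n j) * V (j - 1) := by
      intro j
      match j with
      | 0 => simp [g_zero_right, V]
      | (m + 1) => rw [XV m, Nat.add_sub_cancel]; ring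
    calc (Polynomial.X : Polynomial ℤ) ^ (n + 1)
        = Polynomial.X * (Polynomial.X : Polynomial ℤ) ^ n := by ring
      _ = ∑ j ∈ Finset.range (n + 2), Polynomial.C (g n j) * (Polynomial.X * V j) := by
          rw [ih, Finset.mul_sum]; apply Finset.sum_congr rfl; intro j _; ring
      _ = (∑ j ∈ Finset.range (n + 2), Polynomial.C (g n j) * V (j + 1))
          + ∑ j ∈ Finset.range (n + 2), Polynomial.C (g n j) * V (j - 1) := by
          rw [← Finset.sum_add_distrib]
          exact Finset.sum_congr rfl fun j _ => step j
      _ = ∑ j ∈ Finset.range (n + 3), Polynomial.C (g (n + 1) j) * V j := by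
          have h2 : ∑ j ∈ Finset.range (n + 2), Polynomial.C (g n j) * V (j - 1)
              = ∑ j ∈ Finset.range (n + 2), Polynomial.C (g n (j + 2)) * V (j + 1) := by
            rw [Finset.sum_range_succ' (fun j => Polynomial.C (g n j) * V (j - 1)) (n + 1)]
            simp only [g_zero_right, map_zero, zero_mul, add_zero, Nat.add_sub_cancel]
            rw [Finset.sum_range_succ' (fun j => Polynomial.C (g n (j + 1)) * V j) n]
            rw [show V 0 = (0 : Polynomial ℤ) from rfl, mul_zero, add_zero]
            rw [Finset.sum_range_succ (fun j => Polynomial.C (g n (j + 2)) * V (j + 1)) (n + 1),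
              Finset.sum_range_succ (fun j => Polynomial.C (g n (j + 2)) * V (j + 1)) n]
            rw [g_vanish n (n + 2) (by omega), g_vanish n (n + 3) (by omega)]
            simp
          rw [h2, ← Finset.sum_add_distrib]
          rw [Finset.sum_range_succ' (fun j => Polynomial.C (g (n + 1) j) * V j) (n + 2)]
          rw [show V 0 = (0 : Polynomial ℤ) from rfl, mul_zero, add_zero]
          apply Finset.sum_congr rfl
          intro j _
          show _ = Polynomial.C (g n j + g n (j + 2)) * V (j + 1)
          rw [map_add]; ring

lemma c_pascal (n k : ℕ) (hk : 1 ≤ k) : c (n + 1) k = c n k + c n (k - 1) := by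
  match k, hk with
  | 1, _ => simp [c, Nat.choose_one_right]
  | (m + 2), _ =>
    simp only [c, Nat.choose_succ_succ (n := n) (k := m + 1),
      show m + 2 - 1 = m + 1 from rfl, show m + 1 - 1 = m from rfl,
      Nat.choose_succ_succ (n := n) (k := m), if_neg (by omega : ¬ m + 2 = 0),
      if_neg (by omega : ¬ m + 1 = 0)]
    push_cast; ring

lemma main2 : ∀ n k, 2 * k ≤ n → g n (n + 1 - 2 * k) = c n k := by
  intro n
  induction n with
  | zero =>
    intro k hk
    have : k = 0 := by omega
    subst this
    simp [g, c]
  | succ n ih =>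
    intro k hk
    rcases Nat.eq_zero_or_pos k with rfl | hk1
    · have h1 : n + 1 + 1 - 2 * 0 = (n + 1) + 1 := by omega
      rw [h1]
      show g n (n + 1) + g n (n + 3) = c (n + 1) 0
      rw [show n + 1 = n + 1 - 2 * 0 from by omega]
      rw [ih 0 (by omega), g_vanish n (n + 3) (by omega)]
      simp [c]
      
    · rcases Nat.lt_or_ge n (2 * k) with h2 | h2
      · -- 2k = n+1
        have hn : n + 1 = 2 * k := by omega
        have h1 : n + 1 + 1 - 2 * k = 0 + 1 := by omega
        rw [h1]
        show g n 0 + g n 2 = c (n + 1) k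
        rw [g_zero_right, show (2 : ℕ) = n + 1 - 2 * (k - 1) from by omega,
          ih (k - 1) (by omega)]
        rw [c_pascal n k hk1]
        have hck : c n k = 0 := by
          have hsym : n.choose (n - k) = n.choose k := Nat.choose_symm (by omega)
          have : n - k = k - 1 := by omega
          rw [this] at hsym
          simp [c, if_neg (by omega : ¬ k = 0), hsym]
        rw [hck, zero_add]
      · -- 2k ≤ n, k ≥ 1
        have h1 : n + 1 + 1 - 2 * k = (n + 1 - 2 * k) + 1 := by omega
        rw [h1]
        show g n (n + 1 - 2 * k) + g n (n + 1 - 2 * k + 2) = c (n + 1) k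
        rw [ih k h2, show n + 1 - 2 * k + 2 = n + 1 - 2 * (k - 1) from by omega,
          ih (k - 1) (by omega), c_pascal n k hk1]

lemma coeff_cast (n k : ℕ) (hk : 2 * k ≤ n) :
    (((n - 2 * k + 1) * Nat.choose n k / (n - k + 1) : ℕ) : ℤ) = c n k := by
  match k with
  | 0 =>
    simp [c, Nat.div_self (by omega : 0 < n - 0 + 1)]
  | (m + 1) =>
    have h1 : n.choose (m + 1) * (m + 1) = n.choose m * (n - m) :=
      Nat.choose_succ_right_eq n m
    have hle : n.choose m ≤ n.choose (m + 1) :=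
      Nat.choose_le_succ_of_lt_half_left (by omega)
    have key : (n - 2 * (m + 1) + 1) * n.choose (m + 1)
        = (n - (m + 1) + 1) * (n.choose (m + 1) - n.choose m) := by
      zify [hle, show 2 * (m + 1) ≤ n from hk, show m + 1 ≤ n from by omega,
        show m ≤ n from by omega]
      have h1' : (n.choose (m + 1) : ℤ) * (m + 1) = n.choose m * ((n : ℤ) - m) := by
        zify [show m ≤ n from by omega] at h1; exact h1
      linear_combination -h1'
    rw [key, Nat.mul_div_cancel_left _ (by omega : 0 < n - (m + 1) + 1)]
    rw [c, if_neg (by omega : ¬ m + 1 = 0), Nat.add_sub_cancel]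
    zify [hle]

theorem monomial_in_chebyshev_basis (n : ℕ) :
    (Polynomial.X : Polynomial ℤ) ^ n =
      ∑ k ∈ Finset.range (n / 2 + 1),
        (((n - 2 * k + 1) * Nat.choose n k / (n - k + 1) : ℕ) : Polynomial ℤ) *
          U (n - 2 * k) := by
  rw [main1 n]
  have hsub : (Finset.range (n / 2 + 1)).image (fun k => n + 1 - 2 * k)
      ⊆ Finset.range (n + 2) := by
    intro j hj
    simp only [Finset.mem_image, Finset.mem_range] at hj ⊢
    omega
  have hzero : ∀ j ∈ Finset.range (n + 2),
      j ∉ (Finset.range (n / 2 + 1)).image (fun k => n + 1 - 2 * k) →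
      Polynomial.C (g n j) * V j = 0 := by
    intro j hj hnot
    simp only [Finset.mem_range] at hj
    simp only [Finset.mem_image, Finset.mem_range] at hnot
    rcases Nat.eq_zero_or_pos j with rfl | hj1
    · simp [V]
    · have hpar : (n + j) % 2 = 0 := by
        by_contra hodd
        exact hnot ⟨(n + 1 - j) / 2, by omega, by omega⟩
      rw [g_parity n j hpar]; simp
  rw [← Finset.sum_subset hsub hzero]
  rw [Finset.sum_image (by intro x hx y hy h; simp only [Finset.coe_range, Set.mem_Iio, Finset.mem_coe, Finset.mem_range] at hx hy h; omega)]
  apply Finset.sum_congr rfl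
  intro k hk
  simp only [Finset.mem_range] at hk
  have h2k : 2 * k ≤ n := by omega
  have hV : n + 1 - 2 * k = (n - 2 * k) + 1 := by omega
  rw [main2 n k h2k, hV]
  show Polynomial.C (c n k) * U (n - 2 * k) = _
  rw [← coeff_cast n k h2k]
  norm_cast
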